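/- A real symmetric matrix is positive semidefinite if and only if all of its principal minors (determinants of principal submatrices obtained by selecting the same subset of rows and columns) are nonnegative. -/

import Mathlib

open Matrix Finset

/-- Determinant of a PSD real matrix is nonnegative. -/
lemma aux_psd_det_nonneg {m : Type*} [Fintype m] [DecidableEq m] {A : Matrix m m ℝ}
    (hA : A.PosSemidef) : 0 ≤ A.det := by
  rw [hA.1.det_eq_prod_eigenvalues]
  exact Finset.prod_nonneg fun i _ => by simpa using hA.eigenvalues_nonneg i

/-- Principal submatrices of PSD matrices are PSD. -/
lemma aux_psd_submatrix {n : ℕ} {M : Matrix (Fin n) (Fin n) ℝ} (hP : M.PosSemidef)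
    (I : Finset (Fin n)) :
    (M.submatrix (fun i : I => (i : Fin n)) (fun i : I => (i : Fin n))).PosSemidef := by
  refine PosSemidef.of_dotProduct_mulVec_nonneg (hP.1.submatrix _) fun x => ?_
  set y : Fin n → ℝ := fun j => if h : j ∈ I then x ⟨j, h⟩ else 0 with hy_def
  have hy : ∀ g : Fin n → ℝ, ∑ a, y a * g a = ∑ i : I, x i * g ↑i := by
    intro g
    calc ∑ a : Fin n, y a * g a
        = ∑ a ∈ I, y a * g a :=
          (Finset.sum_subset I.subset_univ (fun a _ ha => by simp [hy_def, dif_neg ha])).symm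
      _ = ∑ i ∈ I.attach, y ↑i * g ↑i := (Finset.sum_attach I _).symm
      _ = ∑ i ∈ I.attach, x i * g ↑i := Finset.sum_congr rfl fun i _ => by simp [hy_def, i.2]
      _ = ∑ i : I, x i * g ↑i := by rw [Finset.univ_eq_attach]
  have key : star x ⬝ᵥ ((M.submatrix (fun i : I => (i : Fin n)) (fun i : I => (i : Fin n))) *ᵥ x)
      = star y ⬝ᵥ (M *ᵥ y) := by
    have hsx : star x = x := by funext i; exact star_trivial _
    have hsy : star y = y := by funext i; exact star_trivial _
    rw [hsx, hsy]
    show ∑ i : I, x i * (∑ j : I, M i j * x j) = ∑ a, y a * (∑ b, M a b * y b)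
    rw [hy (fun a => ∑ b, M a b * y b)]
    refine Finset.sum_congr rfl fun i _ => ?_
    congr 1
    have := hy (fun b => M i b)
    calc ∑ j : I, M i j * x j = ∑ j : I, x j * M i j := by
          exact Finset.sum_congr rfl fun j _ => mul_comm _ _
      _ = ∑ b, y b * M i b := (hy (fun b => M i b)).symm
      _ = ∑ b, M i b * y b := Finset.sum_congr rfl fun b _ => mul_comm _ _
  rw [key]
  exact hP.dotProduct_mulVec_nonneg y

/-- Expansion of `det (A + t • 1)` into principal minors. -/
lemma aux_det_add_smul_one {n : ℕ} (A : Matrix (Fin n) (Fin n) ℝ) (t : ℝ) :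
    (A + t • (1 : Matrix (Fin n) (Fin n) ℝ)).det
      = ∑ s : Finset (Fin n), t ^ (n - s.card) *
          (A.submatrix (fun i : s => (i : Fin n)) (fun i : s => (i : Fin n))).det := by
  set B : Matrix (Fin n) (Fin n) ℝ := t • 1 with hB
  have h1 : (A + B).det = ∑ s : Finset (Fin n), (Matrix.of (s.piecewise A B)).det :=
    (Matrix.detRowAlternating :
      (Fin n → ℝ) [⋀^Fin n]→ₗ[ℝ] ℝ).toMultilinearMap.map_add_univ A B
  rw [h1]
  refine Finset.sum_congr rfl fun s _ => ?_
  -- factor out the scalars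
  have hD : (Matrix.of (s.piecewise A B))
      = (Matrix.diagonal fun i => if i ∈ s then (1 : ℝ) else t) *
        (Matrix.of (s.piecewise A (1 : Matrix (Fin n) (Fin n) ℝ))) := by
    ext i j
    rw [Matrix.diagonal_mul]
    by_cases h : i ∈ s <;>
      simp [Finset.piecewise, h, hB, Matrix.smul_apply]
  have hprod : ∏ i, (if i ∈ s then (1 : ℝ) else t) = t ^ (n - s.card) := by
    rw [Finset.prod_ite, Finset.prod_const_one, one_mul, Finset.prod_const]
    congr 1
    have : Finset.univ.filter (fun i => ¬ i ∈ s) = sᶜ := by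
      ext i; simp
    rw [this, Finset.card_compl, Fintype.card_fin]
  have hsub : (Matrix.of (s.piecewise A (1 : Matrix (Fin n) (Fin n) ℝ))).det
      = (A.submatrix (fun i : s => (i : Fin n)) (fun i : s => (i : Fin n))).det := by
    rw [Matrix.twoBlockTriangular_det _ (fun i => i ∈ s) (fun i hi j hj => by
      have : i ≠ j := fun h => hi (h ▸ hj)
      simp [Finset.piecewise, hi, Matrix.one_apply_ne this])]
    have h2 : (Matrix.toSquareBlockProp (Matrix.of (s.piecewise A (1 : Matrix (Fin n) (Fin n) ℝ)))
        (fun i => i ∈ s)) = A.submatrix (fun i : s => (i : Fin n)) (fun i : s => (i : Fin n)) := by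
      ext i j
      simp [Matrix.toSquareBlockProp, Finset.piecewise, i.2]
    have h3 : (Matrix.toSquareBlockProp (Matrix.of (s.piecewise A (1 : Matrix (Fin n) (Fin n) ℝ)))
        (fun i => ¬ i ∈ s)) = 1 := by
      ext i j
      rw [Matrix.toSquareBlockProp_def, Matrix.of_apply, Matrix.of_apply]
      erw [Finset.piecewise_eq_of_notMem _ _ _ i.2]
      by_cases hij : i = j
      · subst hij; rw [Matrix.one_apply_eq, Matrix.one_apply_eq]
      · rw [Matrix.one_apply_ne (fun h => hij (Subtype.ext h)), Matrix.one_apply_ne hij]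
    rw [h2, h3, Matrix.det_one, mul_one]
    congr!
  rw [hD, Matrix.det_mul, Matrix.det_diagonal, hprod, hsub]

/-- A real symmetric matrix is positive semidefinite iff all its principal
minors (over nonempty index sets) are nonnegative. -/
theorem psd_iff_principal_minors_nonneg {n : ℕ} (M : Matrix (Fin n) (Fin n) ℝ)
    (hM : M.IsSymm) :
    M.PosSemidef ↔
      ∀ I : Finset (Fin n), I.Nonempty →
        0 ≤ (M.submatrix (fun i : I => (i : Fin n)) (fun i : I => (i : Fin n))).det := by
  constructor
  · intro hP I _
    exact aux_psd_det_nonneg (aux_psd_submatrix hP I)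
  · intro h
    have hHerm : M.IsHermitian := by
      rw [Matrix.IsHermitian, Matrix.conjTranspose_eq_transpose_of_trivial]
      exact hM
    have h' : ∀ s : Finset (Fin n),
        0 ≤ (M.submatrix (fun i : s => (i : Fin n)) (fun i : s => (i : Fin n))).det := by
      intro s
      rcases s.eq_empty_or_nonempty with rfl | hs
      · haveI : IsEmpty ((∅ : Finset (Fin n)) : Type) := Finset.isEmpty_coe_sort.2 rfl
        rw [Matrix.det_isEmpty]; norm_num
      · exact h s hs
    refine hHerm.posSemidef_iff_eigenvalues_nonneg.mpr fun i => (?_ : 0 ≤ hHerm.eigenvalues i)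
    by_contra hneg
    push_neg at hneg
    set lam := hHerm.eigenvalues i with hlam
    have ht : 0 < -lam := by linarith
    -- lam is in the spectrum, so det (lam • 1 - M) = 0
    have hsp := hHerm.eigenvalues_mem_spectrum_real i
    rw [spectrum.mem_iff] at hsp
    have hdet0 : (lam • (1 : Matrix (Fin n) (Fin n) ℝ) - M).det = 0 := by
      by_contra hne
      exact hsp <| (Matrix.isUnit_iff_isUnit_det _).2 (isUnit_iff_ne_zero.2 (by
        rwa [Algebra.algebraMap_eq_smul_one]))
    have heq : M + (-lam) • (1 : Matrix (Fin n) (Fin n) ℝ)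
        = -(lam • (1 : Matrix (Fin n) (Fin n) ℝ) - M) := by
      rw [neg_sub, neg_smul, ← sub_eq_add_neg]
    have hzero : (M + (-lam) • (1 : Matrix (Fin n) (Fin n) ℝ)).det = 0 := by
      rw [heq, Matrix.det_neg, hdet0, mul_zero]
    rw [aux_det_add_smul_one M (-lam)] at hzero
    have hle : (-lam) ^ (n - (∅ : Finset (Fin n)).card) *
        (M.submatrix (fun i : (∅ : Finset (Fin n)) => (i : Fin n))
          (fun i : (∅ : Finset (Fin n)) => (i : Fin n))).det
        ≤ ∑ s : Finset (Fin n), (-lam) ^ (n - s.card) *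
          (M.submatrix (fun i : s => (i : Fin n)) (fun i : s => (i : Fin n))).det := by
      refine Finset.single_le_sum (f := fun s : Finset (Fin n) => (-lam) ^ (n - s.card) *
        (M.submatrix (fun i : s => (i : Fin n)) (fun i : s => (i : Fin n))).det)
        (fun s _ => ?_) (Finset.mem_univ ∅)
      exact mul_nonneg (pow_nonneg ht.le _) (h' s)
    haveI : IsEmpty ((∅ : Finset (Fin n)) : Type) := Finset.isEmpty_coe_sort.2 rfl
    rw [Matrix.det_isEmpty, mul_one, Finset.card_empty, Nat.sub_zero, hzero] at hle
    exact absurd hle (not_le.2 (pow_pos ht n))
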